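/- Algebraic-identity characterization of Krull dimension. Let R be a commutative ring and ℓ ≥ 1 an integer. The Krull dimension of R is at most ℓ − 1 if and only if every sequence (x₁,…,x_ℓ) of ℓ elements of R is pseudo singular, i.e. for every x₁,…,x_ℓ ∈ R there exist a₁,…,a_ℓ ∈ R and m₁,…,m_ℓ ∈ ℕ with x₁^{m₁}·(x₂^{m₂}·(⋯(x_ℓ^{m_ℓ}·(1 + a_ℓ x_ℓ) + ⋯) + a₂ x₂) + a₁ x₁) = 0. -/

import Mathlib

open Finset

section CL

variable {R : Type*} [CommRing R]

/-- The nested Coquand–Lombardi expression. -/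
def nestL : List (R × R × ℕ) → R
  | [] => 1
  | (x, a, m) :: t => x ^ m * (nestL t + a * x)

/-- The boundary monoid of `x` over `M`. -/
def bdMonoid (x : R) (M : Submonoid R) : Submonoid R where
  carrier := {z | ∃ m : ℕ, ∃ s a : R, s ∈ M ∧ z = x ^ m * (s + a * x)}
  one_mem' := ⟨0, 1, 0, M.one_mem, by ring⟩
  mul_mem' := by
    rintro _ _ ⟨m, s, a, hs, rfl⟩ ⟨n, t, b, ht, rfl⟩
    exact ⟨m + n, s * t, s * b + t * a + a * b * x, M.mul_mem hs ht, by ring⟩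

lemma mem_bdMonoid {x z : R} {M : Submonoid R} :
    z ∈ bdMonoid x M ↔ ∃ m : ℕ, ∃ s a : R, s ∈ M ∧ z = x ^ m * (s + a * x) := Iff.rfl

/-- The iterated boundary monoid of a list. -/
def SL : List R → Submonoid R
  | [] => ⊥
  | x :: t => bdMonoid x (SL t)

lemma self_mem_SL (x : R) (t : List R) : x ∈ SL (x :: t) :=
  ⟨1, 1, 0, (SL t).one_mem, by ring⟩

lemma Iic_zero_fin {n : ℕ} : Finset.Iic (0 : Fin (n + 1)) = {0} := by
  ext k; simp [Fin.le_zero_iff]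

lemma Iic_succ_fin {n : ℕ} (j : Fin n) :
    Finset.Iic (j.succ) = insert (0 : Fin (n + 1)) ((Finset.Iic j).map (Fin.succEmb n)) := by
  ext k
  induction k using Fin.cases with
  | zero => simp [Fin.zero_le]
  | succ k' =>
    simp [Fin.succ_le_succ_iff, (Fin.succ_ne_zero k').symm, Fin.succ_ne_zero,
      Fin.succ_inj, eq_comm]

lemma prod_Iic_succ_fin {M : Type*} [CommMonoid M] {n : ℕ} (f : Fin (n + 1) → M) (j : Fin n) :
    ∏ k ∈ Finset.Iic j.succ, f k = f 0 * ∏ k ∈ Finset.Iic j, f k.succ := by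
  rw [Iic_succ_fin, Finset.prod_insert (by simp [Fin.succ_ne_zero]), Finset.prod_map]
  rfl

/-- Flattening the nested expression. -/
lemma flatten {ℓ : ℕ} (x a : Fin ℓ → R) (m : Fin ℓ → ℕ) :
    nestL (List.ofFn fun i => (x i, a i, m i)) =
      (∏ i, x i ^ m i) + ∑ i, (∏ k ∈ Finset.Iic i, x k ^ m k) * (a i * x i) := by
  induction ℓ with
  | zero => simp [nestL]
  | succ n ih =>
    rw [List.ofFn_succ]
    show (x 0) ^ (m 0) *
        (nestL (List.ofFn fun i : Fin n => (x i.succ, a i.succ, m i.succ)) + a 0 * x 0) = _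
    rw [ih (fun i => x i.succ) (fun i => a i.succ) (fun i => m i.succ)]
    rw [Fin.prod_univ_succ, Fin.sum_univ_succ]
    rw [Iic_zero_fin]
    simp only [Finset.prod_singleton]
    have hIic : ∀ j : Fin n, ∏ k ∈ Finset.Iic j.succ, x k ^ m k =
        x 0 ^ m 0 * ∏ k ∈ Finset.Iic j, x k.succ ^ m k.succ := fun j =>
      prod_Iic_succ_fin (fun k => x k ^ m k) j
    simp only [hIic]
    have hsum : ∑ i : Fin n, (x 0 ^ m 0 * ∏ k ∈ Finset.Iic i, x k.succ ^ m k.succ) *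
        (a i.succ * x i.succ) =
        x 0 ^ m 0 * ∑ i : Fin n, (∏ k ∈ Finset.Iic i, x k.succ ^ m k.succ) *
        (a i.succ * x i.succ) := by
      rw [Finset.mul_sum]
      exact Finset.sum_congr rfl fun i _ => by ring
    rw [hsum]
    ring

lemma mem_SL_ofFn : ∀ {ℓ : ℕ} (x : Fin ℓ → R) {z : R}, z ∈ SL (List.ofFn x) →
    ∃ (a : Fin ℓ → R) (m : Fin ℓ → ℕ), z = nestL (List.ofFn fun i => (x i, a i, m i)) := by
  intro ℓ
  induction ℓ with
  | zero =>
    intro x z hz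
    refine ⟨Fin.elim0, Fin.elim0, ?_⟩
    have : z = 1 := by simpa [SL] using hz
    simp [this, nestL]
  | succ n ih =>
    intro x z hz
    rw [List.ofFn_succ] at hz
    obtain ⟨m0, s, a0, hs, rfl⟩ := hz
    obtain ⟨a', m', rfl⟩ := ih (fun i => x i.succ) hs
    refine ⟨Fin.cons a0 a', Fin.cons m0 m', ?_⟩
    rw [List.ofFn_succ]
    simp only [nestL, Fin.cons_zero, Fin.cons_succ]

/-- The key boundary step. -/
lemma boundary_step (M : Submonoid R) (x : R) (p : Ideal R) (hp : p.IsPrime)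
    (hd : Disjoint (p : Set R) (bdMonoid x M : Set R)) :
    ∃ q : Ideal R, q.IsPrime ∧ p ≤ q ∧ x ∈ q ∧ Disjoint (q : Set R) (M : Set R) := by
  have hdisj : Disjoint ((p ⊔ Ideal.span {x} : Ideal R) : Set R) (M : Set R) := by
    rw [Set.disjoint_left]
    rintro u hu huM
    obtain ⟨y, hy, z, hz, rfl⟩ := Submodule.mem_sup.mp hu
    obtain ⟨r, rfl⟩ := Ideal.mem_span_singleton'.mp hz
    have hmem : x ^ 1 * ((y + r * x) + (-r) * x) ∈ bdMonoid x M :=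
      ⟨1, y + r * x, -r, huM, rfl⟩
    have hmemp : x ^ 1 * ((y + r * x) + (-r) * x) ∈ p := by
      have : x ^ 1 * ((y + r * x) + (-r) * x) = x * y := by ring
      rw [this]
      exact p.mul_mem_left x hy
    exact Set.disjoint_left.mp hd hmemp hmem
  obtain ⟨q, hq, hle, hqd⟩ := Ideal.exists_le_prime_disjoint _ M hdisj
  refine ⟨q, hq, le_trans le_sup_left hle, ?_, hqd⟩
  exact hle (Submodule.mem_sup_right (Ideal.mem_span_singleton_self x))

lemma chain_of_disjoint : ∀ (xs : List R) (p : Ideal R), p.IsPrime →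
    Disjoint (p : Set R) (SL xs : Set R) →
    ∃ c : LTSeries (PrimeSpectrum R), c.length = xs.length ∧ c.head.asIdeal = p := by
  intro xs
  induction xs with
  | nil =>
    intro p hp _
    exact ⟨RelSeries.singleton _ ⟨p, hp⟩, rfl, rfl⟩
  | cons x t ih =>
    intro p hp hd
    obtain ⟨q, hq, hpq, hxq, hqd⟩ := boundary_step (SL t) x p hp hd
    obtain ⟨c, hlen, hhead⟩ := ih q hq hqd
    have hxp : x ∉ p := fun hxp =>
      Set.disjoint_left.mp hd hxp (self_mem_SL x t)
    have hne : p ≠ q := fun h => hxp (by rw [h]; exact hxq)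
    have hlt : (⟨p, hp⟩ : PrimeSpectrum R) < c.head := by
      rw [← PrimeSpectrum.asIdeal_lt_asIdeal, hhead]
      exact lt_of_le_of_ne hpq hne
    refine ⟨c.cons ⟨p, hp⟩ hlt, ?_, ?_⟩
    · simp [RelSeries.cons_length, hlen]
    · simp [RelSeries.head_cons]

/-- Descent along a chain of primes. -/
lemma descend : ∀ (ts : List (R × R × ℕ)) (q : ℕ → Ideal R),
    (∀ i, (q i).IsPrime) → (∀ i, q i ≤ q (i + 1)) →
    (∀ (i : ℕ) (h : i < ts.length), (ts.get ⟨i, h⟩).1 ∈ q (i + 1) ∧ (ts.get ⟨i, h⟩).1 ∉ q i) →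
    nestL ts ∈ q 0 → (1 : R) ∈ q ts.length := by
  intro ts
  induction ts with
  | nil => intro q _ _ _ h0; exact h0
  | cons h t ih =>
    obtain ⟨x, a, m⟩ := h
    intro q hp hm hx h0
    have hx0 := hx 0 (Nat.succ_pos _)
    have hxq1 : x ∈ q 1 := hx0.1
    have hxq0 : x ∉ q 0 := hx0.2
    have h1 : nestL t + a * x ∈ q 0 := by
      rcases (hp 0).mem_or_mem h0 with h | h
      · exact absurd ((hp 0).mem_of_pow_mem m h) hxq0
      · exact h
    have h2 : nestL t ∈ q 1 := by
      have : nestL t = (nestL t + a * x) - a * x := by ring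
      rw [this]
      exact (q 1).sub_mem (hm 0 h1) ((q 1).mul_mem_left a hxq1)
    have := ih (fun i => q (i + 1)) (fun i => hp (i + 1)) (fun i => hm (i + 1))
      (fun i hi => hx (i + 1) (Nat.succ_lt_succ hi)) h2
    exact this

end CL

/-- The sequence `x 0, …, x (ℓ-1)` is pseudo singular. -/
def IsPseudoSingular {R : Type*} [CommRing R] {ℓ : ℕ} (x : Fin ℓ → R) : Prop :=
  ∃ a : Fin ℓ → R, ∃ m : Fin ℓ → ℕ,
    (∏ i, x i ^ m i) + ∑ i, (∏ k ∈ Finset.Iic i, x k ^ m k) * (a i * x i) = 0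

theorem stmt_6 {R : Type*} [CommRing R] (ℓ : ℕ) (hℓ : 1 ≤ ℓ) :
    ringKrullDim R ≤ ((ℓ - 1 : ℕ) : WithBot ℕ∞) ↔
    ∀ x : Fin ℓ → R, IsPseudoSingular x := by
  constructor
  · -- dim ≤ ℓ - 1 → every sequence pseudo singular
    intro h x
    by_contra hPS
    have h0 : (0 : R) ∉ SL (List.ofFn x) := by
      intro h0
      obtain ⟨a, m, hnest⟩ := mem_SL_ofFn x h0
      exact hPS ⟨a, m, by rw [← flatten, ← hnest]⟩
    have hdisj : Disjoint ((⊥ : Ideal R) : Set R) (SL (List.ofFn x) : Set R) := by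
      rw [Set.disjoint_left]
      intro z hz hz'
      simp only [SetLike.mem_coe, Ideal.mem_bot] at hz
      exact h0 (hz ▸ hz')
    obtain ⟨p, hp, _, hpd⟩ := Ideal.exists_le_prime_disjoint ⊥ _ hdisj
    obtain ⟨c, hlen, _⟩ := chain_of_disjoint (List.ofFn x) p hp hpd
    rw [List.length_ofFn] at hlen
    have hle : (c.length : WithBot ℕ∞) ≤ ((ℓ - 1 : ℕ) : WithBot ℕ∞) :=
      le_trans (Order.LTSeries.length_le_krullDim c) h
    rw [hlen] at hle
    have : ℓ ≤ ℓ - 1 := by exact_mod_cast hle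
    omega
  · -- every sequence pseudo singular → dim ≤ ℓ - 1
    intro hall
    show Order.krullDim (PrimeSpectrum R) ≤ _
    rw [Order.krullDim]
    apply iSup_le
    intro c
    by_contra hc
    push_neg at hc
    have hn : ℓ ≤ c.length := by
      have : ((ℓ - 1 : ℕ) : WithBot ℕ∞) < (c.length : WithBot ℕ∞) := hc
      have : ℓ - 1 < c.length := by exact_mod_cast this
      omega
    -- chain of primes
    set n := c.length with hn'
    have hmin : ∀ i : ℕ, min i n < n + 1 := fun i => Nat.lt_succ_of_le (min_le_right _ _)
    set q : ℕ → Ideal R := fun i => (c ⟨min i n, hmin i⟩).asIdeal with hq'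
    have hqprime : ∀ i, (q i).IsPrime := fun i => (c ⟨min i n, hmin i⟩).isPrime
    have hqmono : ∀ i, q i ≤ q (i + 1) := by
      intro i
      apply (PrimeSpectrum.asIdeal_le_asIdeal _ _).mpr
      apply c.monotone
      simp only [Fin.mk_le_mk]
      omega
    have hstrict : ∀ i : ℕ, i < ℓ → q i < q (i + 1) := by
      intro i hi
      apply (PrimeSpectrum.asIdeal_lt_asIdeal _ _).mpr
      apply c.strictMono
      simp only [Fin.mk_lt_mk]
      omega
    have hex : ∀ i : Fin ℓ, ∃ z : R, z ∈ q (i + 1) ∧ z ∉ q i := by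
      intro i
      obtain ⟨z, hz1, hz2⟩ := SetLike.exists_of_lt (hstrict i i.isLt)
      exact ⟨z, hz1, hz2⟩
    choose x hx1 hx2 using hex
    obtain ⟨a, m, hsing⟩ := hall x
    have hnest : nestL (List.ofFn fun i => (x i, a i, m i)) = 0 := by
      rw [flatten]; exact hsing
    have h1 : (1 : R) ∈ q (List.ofFn fun i => (x i, a i, m i)).length := by
      apply descend _ q hqprime hqmono
      · intro i hi
        rw [List.length_ofFn] at hi
        have : (List.ofFn fun i => (x i, a i, m i)).get ⟨i, by simpa using hi⟩ =
            (x ⟨i, hi⟩, a ⟨i, hi⟩, m ⟨i, hi⟩) := by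
          simp [List.get_ofFn]
        rw [this]
        exact ⟨hx1 ⟨i, hi⟩, hx2 ⟨i, hi⟩⟩
      · rw [hnest]; exact (q 0).zero_mem
    rw [List.length_ofFn] at h1
    exact (hqprime ℓ).ne_top (Ideal.eq_top_iff_one _ |>.mpr h1)
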